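/- arXiv:2011.05472 — 2 statements merged into one kernel-verified Lean document; each statement's English description precedes it below -/
import Mathlib

section
/- A finite multigraph G is a cactus if and only if for every pair of distinct vertices v, w of G the edge connectivity satisfies λ(v, w) = 2. -/
set_option autoImplicit false

/-! ## Multigraphs -/

/-- A multigraph: a vertex type `V`, an edge type `E`, and an assignment to each edge of
its unordered pair of endpoints.  Loops and parallel edges are allowed. -/
structure Multigraph (V E : Type) where
  ends : E → Sym2 V

namespace Multigraph

variable {V E : Type}

/-- `G.ReachAvoid F u v` : `v` can be reached from `u` by a walk using no edge of `F`. -/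
inductive ReachAvoid (G : Multigraph V E) (F : Set E) : V → V → Prop
  | refl (v : V) : ReachAvoid G F v v
  | tail {u v w : V} (e : E) (he : e ∉ F) (hvw : G.ends e = s(v, w))
      (h : ReachAvoid G F u v) : ReachAvoid G F u w

/-- A multigraph is connected if any two vertices are joined by a walk. -/
def Connected (G : Multigraph V E) : Prop := ∀ u v : V, G.ReachAvoid ∅ u v

/-- `F` is a set of edges whose deletion disconnects `v` from `w`. -/
def IsEdgeCut (G : Multigraph V E) (v w : V) (F : Set E) : Prop := ¬ G.ReachAvoid F v w

/-- Edge connectivity `λ(v, w)`: the minimum number of edges whose deletion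
disconnects `v` from `w`. -/
noncomputable def edgeConn (G : Multigraph V E) (v w : V) : ℕ :=
  sInf {k : ℕ | ∃ F : Finset E, F.card = k ∧ G.IsEdgeCut v w ↑F}

/-- Walks in a multigraph, recorded together with the edges they traverse. -/
inductive Walk (G : Multigraph V E) : V → V → Type
  | nil (v : V) : Walk G v v
  | cons {u v w : V} (e : E) (huv : G.ends e = s(u, v)) (p : Walk G v w) : Walk G u w

namespace Walk

variable {G : Multigraph V E}

/-- The list of edges traversed by a walk. -/
def edges : ∀ {u v : V}, G.Walk u v → List E
  | _, _, .nil _ => []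
  | _, _, .cons e _ p => e :: edges p

/-- The list of vertices visited by a walk (including both endpoints). -/
def verts : ∀ {u v : V}, G.Walk u v → List V
  | _, v, .nil _ => [v]
  | u, _, .cons _ _ p => u :: verts p

/-- A walk is a path if it visits no vertex twice. -/
def IsPath {u v : V} (p : G.Walk u v) : Prop := p.verts.Nodup

end Walk

/-- `S` is the edge set of a simple cycle of `G`: a nonempty closed walk with no repeated
edges and no repeated vertices (other than the final return to the starting point).
A loop is a simple cycle of length one. -/
def IsSimpleCycleOn [DecidableEq E] (G : Multigraph V E) (S : Finset E) : Prop :=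
  ∃ (v : V) (p : G.Walk v v),
    p.edges ≠ [] ∧ p.edges.Nodup ∧ p.verts.dropLast.Nodup ∧ p.edges.toFinset = S

/-- A cactus: a connected multigraph in which every edge lies on exactly one simple cycle
(simple cycles being identified with their edge sets). -/
def IsCactus [DecidableEq E] (G : Multigraph V E) : Prop :=
  G.Connected ∧ ∀ e : E, ∃! S : Finset E, G.IsSimpleCycleOn S ∧ e ∈ S

/-- Two-edge-connected: connected, and still connected after deleting any single edge. -/
def TwoEdgeConnected (G : Multigraph V E) : Prop :=
  G.Connected ∧ ∀ (e : E) (u v : V), G.ReachAvoid {e} u v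

/-- The quotient multigraph by a partition (setoid) of the vertices: the vertices are the
blocks, and each edge joins the blocks of its original endpoints. -/
def quot (G : Multigraph V E) (σ : Setoid V) : Multigraph (Quotient σ) E :=
  ⟨fun e => (G.ends e).map (Quotient.mk σ)⟩

/-- Degree of a vertex: the number of edge-incidences at it (loops count twice). -/
def degree [DecidableEq V] [Fintype E] (G : Multigraph V E) (v : V) : ℕ :=
  ∑ e : E,
    Sym2.lift
      ⟨fun a b => (if a = v then 1 else 0) + (if b = v then 1 else 0),
        fun _ _ => add_comm _ _⟩ (G.ends e)

/-- A leaf is a vertex of degree one. -/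
def IsLeaf [DecidableEq V] [Fintype E] (G : Multigraph V E) (v : V) : Prop :=
  G.degree v = 1

/-- A tree: a connected multigraph with no simple cycles. -/
def IsTree [DecidableEq E] (G : Multigraph V E) : Prop :=
  G.Connected ∧ ∀ S : Finset E, ¬ G.IsSimpleCycleOn S

end Multigraph

/-- An embedding of the multigraph `H` into `G`, realizing `H` as a subgraph of `G`. -/
structure Multigraph.Embedding {W F V E : Type} (H : Multigraph W F) (G : Multigraph V E) where
  vmap : W → V
  emap : F → E
  vmap_inj : Function.Injective vmap
  emap_inj : Function.Injective emap
  ends_map : ∀ f : F, G.ends (emap f) = (H.ends f).map vmap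

/-! ## Multidigraphs -/

/-- A multidigraph: vertex type `V`, edge type `E`, and source and target maps. -/
structure Multidigraph (V E : Type) where
  src : E → V
  tgt : E → V

namespace Multidigraph

variable {V E : Type}

/-- The underlying multigraph of a multidigraph. -/
def toMultigraph (D : Multidigraph V E) : Multigraph V E :=
  ⟨fun e => s(D.src e, D.tgt e)⟩

/-- Directed walks in a multidigraph. -/
inductive DiWalk (D : Multidigraph V E) : V → V → Type
  | nil (v : V) : DiWalk D v v
  | cons {u v w : V} (e : E) (hs : D.src e = u) (ht : D.tgt e = v)
      (p : DiWalk D v w) : DiWalk D u w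

namespace DiWalk

variable {D : Multidigraph V E}

/-- The list of edges traversed by a directed walk. -/
def edges : ∀ {u v : V}, D.DiWalk u v → List E
  | _, _, .nil _ => []
  | _, _, .cons e _ _ p => e :: edges p

/-- The list of vertices visited by a directed walk. -/
def verts : ∀ {u v : V}, D.DiWalk u v → List V
  | _, v, .nil _ => [v]
  | u, _, .cons _ _ _ p => u :: verts p

end DiWalk

/-- `S` is the edge set of a simple directed cycle of `D`. -/
def IsDiCycleOn [DecidableEq E] (D : Multidigraph V E) (S : Finset E) : Prop :=
  ∃ (v : V) (p : D.DiWalk v v),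
    p.edges ≠ [] ∧ p.edges.Nodup ∧ p.verts.dropLast.Nodup ∧ p.edges.toFinset = S

/-- An oriented cactus: the underlying multigraph is a cactus and each of its simple
cycles (pads) is a directed cycle. -/
def IsOrientedCactus [DecidableEq E] (D : Multidigraph V E) : Prop :=
  D.toMultigraph.IsCactus ∧
    ∀ S : Finset E, D.toMultigraph.IsSimpleCycleOn S → D.IsDiCycleOn S

/-- The quotient multidigraph by a partition (setoid) of the vertices. -/
def quot (D : Multidigraph V E) (σ : Setoid V) : Multidigraph (Quotient σ) E where
  src := fun e => Quotient.mk σ (D.src e)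
  tgt := fun e => Quotient.mk σ (D.tgt e)

/-- Indegree of a vertex: the number of edges with target `v`. -/
def indeg [DecidableEq V] [Fintype E] (D : Multidigraph V E) (v : V) : ℕ :=
  (Finset.univ.filter fun e => D.tgt e = v).card

/-- Outdegree of a vertex: the number of edges with source `v`. -/
def outdeg [DecidableEq V] [Fintype E] (D : Multidigraph V E) (v : V) : ℕ :=
  (Finset.univ.filter fun e => D.src e = v).card

end Multidigraph

/-- An embedding of the multidigraph `H` into `G`, realizing `H` as a subgraph of `G`. -/
structure Multidigraph.Embedding {W F V E : Type}
    (H : Multidigraph W F) (G : Multidigraph V E) where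
  vmap : W → V
  emap : F → E
  vmap_inj : Function.Injective vmap
  emap_inj : Function.Injective emap
  src_map : ∀ f : F, G.src (emap f) = vmap (H.src f)
  tgt_map : ∀ f : F, G.tgt (emap f) = vmap (H.tgt f)

/-! ## Cycle graphs and non-crossing partitions -/

/-- The cycle graph of length `n`: vertices `Fin n`, edges `Fin n`, edge `i` joining
`v i` and `v (i+1)` (indices mod `n`). -/
def cycleGraph (n : ℕ) [NeZero n] : Multigraph (Fin n) (Fin n) :=
  ⟨fun i => s(i, i + 1)⟩

/-- The cycle graph of length `n` in which each edge carries an orientation: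
edge `i` is oriented counterclockwise (from `v i` to `v (i+1)`) if `orient i = true`,
and clockwise otherwise. -/
def cycleDigraph (n : ℕ) [NeZero n] (orient : Fin n → Bool) : Multidigraph (Fin n) (Fin n) where
  src := fun i => if orient i then i else i + 1
  tgt := fun i => if orient i then i + 1 else i

/-- A relation (e.g. a partition) on `Fin m` is non-crossing if there are no indices
`i₁ < i₂ < i₃ < i₄` with `i₁, i₃` in one block and `i₂, i₄` in a different block. -/
def NonCrossingRel {m : ℕ} (r : Fin m → Fin m → Prop) : Prop :=
  ¬ ∃ i₁ i₂ i₃ i₄ : Fin m, i₁ < i₂ ∧ i₂ < i₃ ∧ i₃ < i₄ ∧ r i₁ i₃ ∧ r i₂ i₄ ∧ ¬ r i₁ i₂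

/-- The union of a partition `σ` of the vertices `v₁, …, vₙ` (at the even positions) and
a partition `κ` of the edges `e₁, …, eₙ` (at the odd positions) of a cycle, as a relation
on the `2n` interlaced points `v₁, e₁, v₂, e₂, …, vₙ, eₙ`. -/
def interRel {n : ℕ} (σ κ : Setoid (Fin n)) (x y : Fin (2 * n)) : Prop :=
  (x.val % 2 = 0 ∧ y.val % 2 = 0 ∧
    σ.r ⟨x.val / 2, by have := x.isLt; omega⟩ ⟨y.val / 2, by have := y.isLt; omega⟩) ∨
  (x.val % 2 = 1 ∧ y.val % 2 = 1 ∧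
    κ.r ⟨x.val / 2, by have := x.isLt; omega⟩ ⟨y.val / 2, by have := y.isLt; omega⟩)

/-- `κ` is the Kreweras complement of `σ`: the largest partition of the edges such that
the union `σ ∪ κ` is non-crossing with respect to the interlaced (cyclic) order. -/
def IsKrewerasComplement {n : ℕ} (σ κ : Setoid (Fin n)) : Prop :=
  NonCrossingRel (interRel σ κ) ∧
    ∀ κ' : Setoid (Fin n), NonCrossingRel (interRel σ κ') → κ' ≤ κ

open Classical in
/-- The block of the partition `κ` containing `i`, as a finite set. -/
noncomputable def setoidClass {n : ℕ} (κ : Setoid (Fin n)) (i : Fin n) : Finset (Fin n) :=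
  Finset.univ.filter fun j => κ.r i j

open Fin.NatCast in
/-- `j` is the next element of `B` encountered strictly after `i` in the cyclic order of
`Fin n` (if `B = {i}` then `j = i` itself, one full turn later). -/
def CyclicNextIn {n : ℕ} [NeZero n] (B : Finset (Fin n)) (i j : Fin n) : Prop :=
  i ∈ B ∧ j ∈ B ∧ ∃ d : ℕ, 0 < d ∧ d ≤ n ∧ j = i + (d : Fin n) ∧
    ∀ d' : ℕ, 0 < d' → d' < d → i + (d' : Fin n) ∉ B

/-! ## Wedges of two (di)graphs at their roots -/

/-- The canonical map from the vertices of `t'` into the wedge vertex type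
`V ⊕ {x : V' // x ≠ ρ'}`, sending the root `ρ'` to (the image of) `ρ`. -/
def wedgeJ {V V' : Type} [DecidableEq V'] (ρ : V) (ρ' : V') :
    V' → V ⊕ {x : V' // x ≠ ρ'} :=
  fun x => if h : x = ρ' then Sum.inl ρ else Sum.inr ⟨x, h⟩

/-- The wedge of two multigraphs `t`, `t'` obtained by identifying `ρ ∈ t` with `ρ' ∈ t'`. -/
def Multigraph.wedge {V E V' E' : Type} [DecidableEq V']
    (t : Multigraph V E) (t' : Multigraph V' E') (ρ : V) (ρ' : V') :
    Multigraph (V ⊕ {x : V' // x ≠ ρ'}) (E ⊕ E') :=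
  ⟨fun e =>
    match e with
    | Sum.inl e => (t.ends e).map Sum.inl
    | Sum.inr e => (t'.ends e).map (wedgeJ ρ ρ')⟩

/-- The wedge of two multidigraphs `t`, `t'` obtained by identifying `ρ ∈ t` with `ρ' ∈ t'`. -/
def Multidigraph.wedge {V E V' E' : Type} [DecidableEq V']
    (t : Multidigraph V E) (t' : Multidigraph V' E') (ρ : V) (ρ' : V') :
    Multidigraph (V ⊕ {x : V' // x ≠ ρ'}) (E ⊕ E') where
  src := fun e =>
    match e with
    | Sum.inl e => Sum.inl (t.src e)
    | Sum.inr e => wedgeJ ρ ρ' (t'.src e)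
  tgt := fun e =>
    match e with
    | Sum.inl e => Sum.inl (t.tgt e)
    | Sum.inr e => wedgeJ ρ ρ' (t'.tgt e)

/-! ## Flowers (a cycle with graphs attached) and stars (trees wedged at a common root) -/

/-- The canonical map from the vertices of the `i`-th attached graph into the flower,
sending the basepoint `b i` to the cycle vertex `i`. -/
def flowerJ {n : ℕ} {W : Fin n → Type} [∀ i, DecidableEq (W i)]
    (b : ∀ i, W i) (i : Fin n) :
    W i → Fin n ⊕ (Σ i, {x : W i // x ≠ b i}) :=
  fun x => if h : x = b i then Sum.inl i else Sum.inr ⟨i, x, h⟩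

/-- The flower: a cycle of length `n` with the multigraph `d i` attached at the cycle
vertex `i` via its basepoint `b i`; the attached graphs are disjoint except through the
cycle, and `d i` meets the cycle exactly in the vertex `i`. -/
def flowerGraph {n : ℕ} [NeZero n] {W F : Fin n → Type} [∀ i, DecidableEq (W i)]
    (d : ∀ i, Multigraph (W i) (F i)) (b : ∀ i, W i) :
    Multigraph (Fin n ⊕ (Σ i, {x : W i // x ≠ b i})) (Fin n ⊕ (Σ i, F i)) :=
  ⟨fun e =>
    match e with
    | Sum.inl k => s(Sum.inl k, Sum.inl (k + 1))
    | Sum.inr ⟨i, f⟩ => ((d i).ends f).map (flowerJ b i)⟩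

/-- The canonical map from the vertices of the `i`-th tree into the star, sending the
root `r i` to the common amalgamated root. -/
def starJ {n : ℕ} {W : Fin n → Type} [∀ i, DecidableEq (W i)]
    (r : ∀ i, W i) (i : Fin n) :
    W i → Unit ⊕ (Σ i, {x : W i // x ≠ r i}) :=
  fun x => if h : x = r i then Sum.inl () else Sum.inr ⟨i, x, h⟩

/-- The star: the disjoint union of the multigraphs `t i` with all the roots `r i`
identified to a single vertex. -/
def starGraph {n : ℕ} {W F : Fin n → Type} [∀ i, DecidableEq (W i)]
    (t : ∀ i, Multigraph (W i) (F i)) (r : ∀ i, W i) :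
    Multigraph (Unit ⊕ (Σ i, {x : W i // x ≠ r i})) (Σ i, F i) :=
  ⟨fun e => ((t e.1).ends e.2).map (starJ r e.1)⟩

/-! ## Graphs of matrices -/

/-- The partition of `V` identifying the input `vin` with the output `vout` (and nothing
else). -/
def rootSetoid {V : Type} (vin vout : V) : Setoid V where
  r a b := a = b ∨ ((a = vin ∨ a = vout) ∧ (b = vin ∨ b = vout))
  iseqv := by
    constructor
    · intro x; exact Or.inl rfl
    · rintro x y (rfl | ⟨hx, hy⟩)
      · exact Or.inl rfl
      · exact Or.inr ⟨hy, hx⟩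
    · rintro x y z (rfl | ⟨hx, hy⟩) (rfl | ⟨hy', hz⟩)
      · exact Or.inl rfl
      · exact Or.inr ⟨hy', hz⟩
      · exact Or.inr ⟨hx, hy⟩
      · exact Or.inr ⟨hx, hz⟩

/-- The graph of matrices `Z_g(A₁, …, A_K)` associated to a bi-rooted multidigraph `g`
with input `vin`, output `vout` and edge ordering `o`. -/
noncomputable def graphOfMatrices {V E : Type} [Fintype V] [Fintype E] [DecidableEq V] {K N : ℕ}
    (g : Multidigraph V E) (vin vout : V) (o : E ≃ Fin K)
    (A : Fin K → Matrix (Fin N) (Fin N) ℂ) : Matrix (Fin N) (Fin N) ℂ :=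
  Matrix.of fun i j =>
    ∑ φ : V → Fin N,
      if φ vout = i ∧ φ vin = j then ∏ e : E, A (o e) (φ (g.tgt e)) (φ (g.src e)) else 0

/-! ## Set partitions as finite set systems -/

/-- `P` is a partition of the (finite) type `V`: its blocks are nonempty and every
element of `V` lies in exactly one block. -/
def IsPartitionOf (V : Type) [DecidableEq V] (P : Finset (Finset V)) : Prop :=
  (∀ B ∈ P, B.Nonempty) ∧ ∀ v : V, ∃! B, B ∈ P ∧ v ∈ B

/-- The block of the partition `P` containing `v`. -/
def blockOf {V : Type} [DecidableEq V] (P : Finset (Finset V)) (hP : IsPartitionOf V P)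
    (v : V) : {B : Finset V // B ∈ P} :=
  ⟨Finset.choose (fun B => v ∈ B) P (hP.2 v),
    Finset.choose_mem (fun B => v ∈ B) P (hP.2 v)⟩

namespace Multigraph

variable {V E : Type} {G : Multigraph V E}

lemma sym2_exists (z : Sym2 V) : ∃ a b : V, z = s(a, b) :=
  Sym2.ind (fun a b => ⟨a, b, rfl⟩) z

namespace Walk

@[simp] lemma edges_nil {v : V} : (Walk.nil v : G.Walk v v).edges = [] := rfl
@[simp] lemma edges_cons {u v w : V} (e : E) (h : G.ends e = s(u, v)) (p : G.Walk v w) :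
    (Walk.cons e h p).edges = e :: p.edges := rfl
@[simp] lemma verts_nil {v : V} : (Walk.nil v : G.Walk v v).verts = [v] := rfl
@[simp] lemma verts_cons {u v w : V} (e : E) (h : G.ends e = s(u, v)) (p : G.Walk v w) :
    (Walk.cons e h p).verts = u :: p.verts := rfl

lemma verts_ne_nil : ∀ {u v : V} (p : G.Walk u v), p.verts ≠ []
  | _, _, .nil _ => by simp
  | _, _, .cons _ _ _ => by simp

lemma start_mem_verts : ∀ {u v : V} (p : G.Walk u v), u ∈ p.verts
  | _, _, .nil _ => by simp
  | _, _, .cons _ _ _ => by simp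

lemma verts_eq : ∀ {u v : V} (p : G.Walk u v), p.verts = p.verts.dropLast ++ [v]
  | _, _, .nil v => rfl
  | _, _, .cons e h p => by
      have h1 := verts_eq p
      have h2 : (Walk.cons e h p).verts = _ :: p.verts := rfl
      rw [h2]
      cases hp : p.verts with
      | nil => exact absurd hp (verts_ne_nil p)
      | cons a l =>
        rw [List.dropLast_cons₂]
        rw [hp] at h1
        simpa using h1

lemma end_mem_verts {u v : V} (p : G.Walk u v) : v ∈ p.verts := by
  rw [verts_eq p]; simp

lemma not_end_mem_dropLast {u v : V} (p : G.Walk u v) (h : p.verts.Nodup) :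
    v ∉ p.verts.dropLast := by
  intro hv
  have h1 := verts_eq p
  rw [h1] at h
  have := (List.nodup_append'.mp h).2.2
  exact this hv (by simp)

lemma mem_verts_of_mem_ends : ∀ {u v : V} (p : G.Walk u v) {e : E} {x : V},
    e ∈ p.edges → x ∈ G.ends e → x ∈ p.verts
  | _, _, .nil _, _, _, he, _ => by simp at he
  | _, _, .cons f h p, e, x, he, hx => by
      simp only [edges_cons, List.mem_cons] at he
      rcases he with rfl | he
      · rw [h] at hx
        rcases Sym2.mem_iff.mp hx with rfl | rfl
        · simp
        · simp only [verts_cons, List.mem_cons]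
          exact Or.inr (start_mem_verts p)
      · simp only [verts_cons, List.mem_cons]
        exact Or.inr (mem_verts_of_mem_ends p he hx)

def append : ∀ {u v w : V}, G.Walk u v → G.Walk v w → G.Walk u w
  | _, _, _, .nil _, q => q
  | _, _, _, .cons e h p, q => .cons e h (append p q)

@[simp] lemma edges_append : ∀ {u v w : V} (p : G.Walk u v) (q : G.Walk v w),
    (p.append q).edges = p.edges ++ q.edges
  | _, _, _, .nil _, q => rfl
  | _, _, _, .cons e h p, q => by
      show (Walk.cons e h (p.append q)).edges = _
      simp [edges_append p q]

lemma verts_append : ∀ {u v w : V} (p : G.Walk u v) (q : G.Walk v w),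
    (p.append q).verts = p.verts.dropLast ++ q.verts
  | _, _, _, .nil _, q => rfl
  | _, _, _, .cons e h p, q => by
      show (Walk.cons e h (p.append q)).verts = _
      rw [verts_cons, verts_append p q, verts_cons]
      cases hp : p.verts with
      | nil => exact absurd hp (verts_ne_nil p)
      | cons a l => rw [List.dropLast_cons₂]; simp

lemma eq_of_edges_nil : ∀ {u v : V} (p : G.Walk u v), p.edges = [] → u = v
  | _, _, .nil _, _ => rfl
  | _, _, .cons _ _ _, h => by simp at h

lemma exists_end_edge : ∀ {u v : V} (p : G.Walk u v), p.edges ≠ [] →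
    ∃ g ∈ p.edges, v ∈ G.ends g
  | _, _, .nil _, h => absurd rfl h
  | u, v, .cons e hh q, _ => by
      by_cases hq : q.edges = []
      · have hm := eq_of_edges_nil q hq
        subst hm
        exact ⟨e, by simp, by rw [hh]; simp⟩
      · obtain ⟨g, hg, hg2⟩ := exists_end_edge q hq
        exact ⟨g, by simp [hg], hg2⟩

lemma closed_nodup_eq_nil : ∀ {a : V} (q : G.Walk a a), q.verts.Nodup → q.edges = []
  | _, .nil _, _ => rfl
  | a, .cons e h q, hn => by
      exfalso
      simp only [verts_cons, List.nodup_cons] at hn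
      exact hn.1 (end_mem_verts q)

lemma edges_nodup_of_path : ∀ {u v : V} (p : G.Walk u v), p.IsPath → p.edges.Nodup
  | _, _, .nil _, _ => by simp
  | u, v, .cons e h p, hp => by
      simp only [IsPath, verts_cons, List.nodup_cons] at hp
      simp only [edges_cons, List.nodup_cons]
      refine ⟨fun he => ?_, edges_nodup_of_path p hp.2⟩
      exact hp.1 (mem_verts_of_mem_ends p he (by rw [h]; simp))

end Walk

lemma ReachAvoid.trans {F : Set E} {u v w : V} (h1 : G.ReachAvoid F u v)
    (h2 : G.ReachAvoid F v w) : G.ReachAvoid F u w := by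
  induction h2 with
  | refl => exact h1
  | tail e he hvw _ ih => exact .tail e he hvw ih

lemma ReachAvoid.single {F : Set E} {e : E} {a b : V} (he : e ∉ F)
    (h : G.ends e = s(a, b)) : G.ReachAvoid F a b := .tail e he h (.refl a)

lemma ReachAvoid.symm {F : Set E} {u v : V} (h : G.ReachAvoid F u v) :
    G.ReachAvoid F v u := by
  induction h with
  | refl => exact .refl _
  | tail e he hvw _ ih =>
      exact (ReachAvoid.single he (hvw.trans (Sym2.eq_swap))).trans ih

lemma Walk.reachAvoid {F : Set E} : ∀ {u v : V} (p : G.Walk u v),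
    (∀ f ∈ p.edges, f ∉ F) → G.ReachAvoid F u v
  | _, _, .nil v, _ => .refl v
  | _, _, .cons e h p, hf =>
      (ReachAvoid.single (hf e (by simp)) h).trans
        (p.reachAvoid fun f hf' => hf f (by simp [hf']))

lemma ReachAvoid.exists_walk_rev {F : Set E} {u v : V} (h : G.ReachAvoid F u v) :
    ∃ p : G.Walk v u, ∀ f ∈ p.edges, f ∉ F := by
  induction h with
  | refl => exact ⟨.nil _, by simp⟩
  | tail e he hvw _ ih =>
      obtain ⟨p, hp⟩ := ih
      refine ⟨.cons e (hvw.trans Sym2.eq_swap) p, ?_⟩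
      intro f hf
      simp only [Walk.edges_cons, List.mem_cons] at hf
      rcases hf with rfl | hf
      · exact he
      · exact hp f hf

end Multigraph
namespace Multigraph

variable {V E : Type} {G : Multigraph V E}

namespace Walk

lemma exists_dropUntil : ∀ {m t : V} (q : G.Walk m t), q.verts.Nodup →
    ∀ {u : V}, u ∈ q.verts → ∃ r : G.Walk u t, r.IsPath ∧ ∀ f ∈ r.edges, f ∈ q.edges
  | _, _, .nil v, _, u, hu => by
      have : u = v := by simpa using hu
      subst this
      exact ⟨.nil u, by simp [IsPath], by simp⟩
  | m, t, .cons e h q, hnd, u, hu => by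
      by_cases hum : u = m
      · subst hum
        exact ⟨.cons e h q, hnd, fun f hf => hf⟩
      · have hu' : u ∈ q.verts := by
          simp only [verts_cons, List.mem_cons] at hu
          tauto
        have hnd' : q.verts.Nodup := by
          simp only [verts_cons, List.nodup_cons] at hnd
          exact hnd.2
        obtain ⟨r, hr1, hr2⟩ := exists_dropUntil q hnd' hu'
        exact ⟨r, hr1, fun f hf => by simp [hr2 f hf]⟩

lemma exists_path : ∀ {u v : V} (p : G.Walk u v),
    ∃ q : G.Walk u v, q.IsPath ∧ ∀ f ∈ q.edges, f ∈ p.edges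
  | _, _, .nil v => ⟨.nil v, by simp [IsPath], by simp⟩
  | u, v, .cons e h p => by
      obtain ⟨q, hq, hsub⟩ := exists_path p
      by_cases hu : u ∈ q.verts
      · obtain ⟨r, hr1, hr2⟩ := exists_dropUntil q hq hu
        exact ⟨r, hr1, fun f hf => by simp [hsub f (hr2 f hf)]⟩
      · refine ⟨.cons e h q, ?_, ?_⟩
        · simp only [IsPath, verts_cons, List.nodup_cons]
          exact ⟨hu, hq⟩
        · intro f hf
          simp only [edges_cons, List.mem_cons] at hf ⊢
          rcases hf with rfl | hf
          · exact Or.inl rfl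
          · exact Or.inr (hsub f hf)

lemma exists_split_vertex : ∀ {u v : V} (p : G.Walk u v) {x : V}, x ∈ p.verts →
    ∃ (q : G.Walk u x) (r : G.Walk x v), p.edges = q.edges ++ r.edges ∧
      p.verts = q.verts.dropLast ++ r.verts
  | _, _, .nil v, x, hx => by
      have : x = v := by simpa using hx
      subst this
      exact ⟨.nil x, .nil x, by simp, by simp⟩
  | u, v, .cons e h p, x, hx => by
      by_cases hxu : x = u
      · subst hxu
        exact ⟨.nil x, .cons e h p, by simp, by simp⟩
      · have hx' : x ∈ p.verts := by
          simp only [verts_cons, List.mem_cons] at hx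
          tauto
        obtain ⟨q, r, he, hv⟩ := exists_split_vertex p hx'
        refine ⟨.cons e h q, r, by simp [he], ?_⟩
        rw [verts_cons, verts_cons]
        cases hq : q.verts with
        | nil => exact absurd hq (verts_ne_nil q)
        | cons a l =>
          rw [List.dropLast_cons₂]
          rw [hv, hq]
          simp

lemma exists_split_edge : ∀ {u v : V} (p : G.Walk u v) {e : E}, e ∈ p.edges →
    ∃ (x y : V) (q : G.Walk u x) (r : G.Walk y v), G.ends e = s(x, y) ∧
      p.edges = q.edges ++ e :: r.edges ∧ p.verts = q.verts ++ r.verts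
  | _, _, .nil _, _, he => by simp at he
  | u, v, .cons f h p, e, he => by
      by_cases hef : e = f
      · subst hef
        exact ⟨u, _, .nil u, p, h, by simp, by simp⟩
      · have he' : e ∈ p.edges := by
          simp only [edges_cons, List.mem_cons] at he
          tauto
        obtain ⟨x, y, q, r, h1, h2, h3⟩ := exists_split_edge p he'
        exact ⟨x, y, .cons f h q, r, h1, by simp [h2], by simp [h3]⟩

end Walk

/-- Closing a path with an edge yields a simple cycle. -/
lemma isSimpleCycleOn_cons [DecidableEq E] {a b : V} {e : E} (P : G.Walk b a)
    (hP : P.IsPath) (hends : G.ends e = s(a, b)) (he : e ∉ P.edges) :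
    G.IsSimpleCycleOn (Walk.cons e hends P).edges.toFinset := by
  refine ⟨a, .cons e hends P, by simp, ?_, ?_, rfl⟩
  · simp only [Walk.edges_cons, List.nodup_cons]
    exact ⟨he, P.edges_nodup_of_path hP⟩
  · rw [Walk.verts_cons]
    cases hp : P.verts with
    | nil => exact absurd hp (P.verts_ne_nil)
    | cons c l =>
      rw [List.dropLast_cons₂, ← hp]
      refine List.nodup_cons.mpr ⟨?_, ?_⟩
      · exact P.not_end_mem_dropLast hP
      · exact hP.sublist (List.dropLast_sublist _)

/-- A simple cycle through a loop consists of the loop alone. -/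
lemma cycle_eq_of_loop [DecidableEq E] {S : Finset E} {e : E} {a : V}
    (hS : G.IsSimpleCycleOn S) (heS : e ∈ S) (hloop : G.ends e = s(a, a)) :
    S = {e} := by
  obtain ⟨z, c, hne, hnd, hvnd, rfl⟩ := hS
  have hec : e ∈ c.edges := List.mem_toFinset.mp heS
  obtain ⟨x, y, q, r, hxy, hed, hvs⟩ := c.exists_split_edge hec
  have hx : x = a ∧ y = a := by
    have := hxy.symm.trans hloop
    rcases Sym2.eq_iff.mp this with ⟨h1, h2⟩ | ⟨h1, h2⟩ <;> exact ⟨h1, h2⟩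
  obtain ⟨rfl, rfl⟩ := hx
  rw [hvs] at hvnd
  cases r with
  | nil =>
      have hq : q.verts.Nodup := by
        simp only [Walk.verts_nil] at hvnd
        rw [List.dropLast_concat] at hvnd
        exact hvnd
      have := q.closed_nodup_eq_nil hq
      rw [hed, this]
      simp
  | cons f hf r' =>
      exfalso
      rw [Walk.verts_cons] at hvnd
      rw [List.dropLast_append_of_ne_nil (List.cons_ne_nil _ _)] at hvnd
      cases hr : r'.verts with
      | nil => exact absurd hr r'.verts_ne_nil
      | cons cc l =>
        rw [hr, List.dropLast_cons₂] at hvnd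
        have := (List.nodup_append'.mp hvnd).2.2
        exact this q.end_mem_verts (by simp)

end Multigraph
namespace Multigraph

variable {V E : Type} {G : Multigraph V E}

lemma ear_aux {VC : List V} {T : List E}
    (hT : ∀ f ∈ T, ∀ x, x ∈ G.ends f → x ∈ VC) :
    ∀ {m t : V} (Q : G.Walk m t), m ∉ VC → t ∈ VC →
      ∃ v, v ∈ VC ∧ v ∈ Q.verts ∧ ∃ R : G.Walk m v, ∀ f ∈ R.edges, f ∉ T
  | m, _, .nil _, hm, ht => absurd ht hm
  | m, t, .cons (v := m₂) f h Q', hm, ht => by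
      have hfT : f ∉ T := fun hf => hm (hT f hf m (by rw [h]; simp))
      by_cases hm2 : m₂ ∈ VC
      · refine ⟨m₂, hm2, ?_, .cons f h (.nil m₂), ?_⟩
        · simp only [Walk.verts_cons, List.mem_cons]
          exact Or.inr Q'.start_mem_verts
        · intro g hg
          simp only [Walk.edges_cons, Walk.edges_nil, List.mem_cons] at hg
          rcases hg with rfl | hg
          · exact hfT
          · simp at hg
      · obtain ⟨v, hv1, hv2, R', hR'⟩ := ear_aux hT Q' hm2 ht
        refine ⟨v, hv1, by simp [hv2], .cons f h R', ?_⟩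
        intro g hg
        simp only [Walk.edges_cons, List.mem_cons] at hg
        rcases hg with rfl | hg
        · exact hfT
        · exact hR' g hg

lemma ear {VC : List V} {T : List E}
    (hT : ∀ f ∈ T, ∀ x, x ∈ G.ends f → x ∈ VC) :
    ∀ {s t : V} (P : G.Walk s t), P.verts.Nodup → s ∈ VC → t ∈ VC →
      (∃ g ∈ P.edges, g ∉ T) →
      ∃ u v, u ≠ v ∧ u ∈ VC ∧ v ∈ VC ∧ ∃ R : G.Walk u v, ∀ f ∈ R.edges, f ∉ T
  | _, _, .nil _, _, _, _, hg => by simp at hg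
  | s, t, .cons (v := m) f h P', hnd, hs, ht, hg => by
      have hnd' : P'.verts.Nodup ∧ s ∉ P'.verts := by
        simp only [Walk.verts_cons, List.nodup_cons] at hnd
        exact ⟨hnd.2, hnd.1⟩
      by_cases hfT : f ∈ T
      · have hm : m ∈ VC := hT f hfT m (by rw [h]; simp)
        refine ear hT P' hnd'.1 hm ht ?_
        obtain ⟨g, hg1, hg2⟩ := hg
        have : g ≠ f := fun hh => hg2 (hh ▸ hfT)
        simp only [Walk.edges_cons, List.mem_cons] at hg1
        exact ⟨g, hg1.resolve_left this, hg2⟩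
      · by_cases hm : m ∈ VC
        · have hsm : s ≠ m := fun hh => hnd'.2 (hh ▸ P'.start_mem_verts)
          refine ⟨s, m, hsm, hs, hm, .cons f h (.nil m), ?_⟩
          intro g hgm
          simp only [Walk.edges_cons, Walk.edges_nil, List.mem_cons] at hgm
          rcases hgm with rfl | hgm
          · exact hfT
          · simp at hgm
        · obtain ⟨v, hv1, hv2, R', hR'⟩ := ear_aux hT P' hm ht
          have hsv : s ≠ v := fun hh => hnd'.2 (hh ▸ hv2)
          refine ⟨s, v, hsv, hs, hv1, .cons f h R', ?_⟩
          intro g hgm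
          simp only [Walk.edges_cons, List.mem_cons] at hgm
          rcases hgm with rfl | hgm
          · exact hfT
          · exact hR' g hgm

/-- Two distinct cycles sharing a non-loop edge contradict the existence of 2-cuts. -/
lemma thetaContra [DecidableEq E]
    (Hcut : ∀ u v : V, u ≠ v → ∃ F : Finset E, F.card = 2 ∧ ¬ G.ReachAvoid ↑F u v)
    {z₁ z₂ : V} (c₁ : G.Walk z₁ z₁) (c₂ : G.Walk z₂ z₂)
    (hnd₁ : c₁.edges.Nodup) (hvnd₁ : c₁.verts.dropLast.Nodup)
    (hnd₂ : c₂.edges.Nodup) (hvnd₂ : c₂.verts.dropLast.Nodup)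
    {e : E} (he₁ : e ∈ c₁.edges) (he₂ : e ∈ c₂.edges)
    {a b : V} (hab : G.ends e = s(a, b)) (hne : a ≠ b)
    {g : E} (hg₂ : g ∈ c₂.edges) (hg₁ : g ∉ c₁.edges) : False := by
  -- split c₂ at e, forming the path P = c₂ - e
  obtain ⟨x, y, q₂, r₂, hxy, hed₂, hvs₂⟩ := c₂.exists_split_edge he₂
  set P := r₂.append q₂ with hP
  have hPedges : P.edges = r₂.edges ++ q₂.edges := Walk.edges_append r₂ q₂
  have hPverts : P.verts = r₂.verts.dropLast ++ q₂.verts := Walk.verts_append r₂ q₂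
  have hxyne : x ≠ y := by
    rcases Sym2.eq_iff.mp (hxy.symm.trans hab) with ⟨rfl, rfl⟩ | ⟨rfl, rfl⟩
    · exact hne
    · exact hne.symm
  have hge : g ≠ e := fun hh => hg₁ (hh ▸ he₁)
  have hgP : g ∈ P.edges := by
    rw [hed₂] at hg₂
    rw [hPedges]
    simp only [List.mem_append, List.mem_cons] at hg₂ ⊢
    tauto
  have hPnd : P.verts.Nodup := by
    rw [hvs₂] at hvnd₂
    rw [List.dropLast_append_of_ne_nil r₂.verts_ne_nil] at hvnd₂
    rw [hPverts]
    exact (List.perm_append_comm.nodup_iff).mpr hvnd₂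
  -- endpoints of e lie on c₁
  have hxc : x ∈ c₁.verts := c₁.mem_verts_of_mem_ends he₁ (by rw [hxy]; simp)
  have hyc : y ∈ c₁.verts := c₁.mem_verts_of_mem_ends he₁ (by rw [hxy]; simp)
  have hT : ∀ f ∈ c₁.edges, ∀ w, w ∈ G.ends f → w ∈ c₁.verts :=
    fun f hf w hw => c₁.mem_verts_of_mem_ends hf hw
  -- extract an ear
  obtain ⟨u, v, huv, hu, hv, R, hR⟩ := ear hT P hPnd hyc hxc ⟨g, hgP, hg₁⟩
  -- split c₁ into two arcs between u and v
  obtain ⟨q₁, r₁, hed₁, hvs₁⟩ := c₁.exists_split_vertex hu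
  set rot := r₁.append q₁ with hrot
  have hrote : rot.edges = r₁.edges ++ q₁.edges := Walk.edges_append r₁ q₁
  have hperm : rot.edges.Perm c₁.edges := by
    rw [hrote, hed₁]; exact List.perm_append_comm
  have hrotnd : rot.edges.Nodup := hperm.nodup_iff.mpr hnd₁
  have hvrot : v ∈ rot.verts := by
    have hv' := hv
    rw [hvs₁] at hv'
    rw [Walk.verts_append]
    simp only [List.mem_append] at hv' ⊢
    rcases hv' with hv' | hv'
    · exact Or.inr ((List.dropLast_sublist _).subset hv')
    · rw [Walk.verts_eq r₁] at hv'
      simp only [List.mem_append, List.mem_singleton] at hv'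
      rcases hv' with hv' | rfl
      · exact Or.inl hv'
      · exact Or.inr q₁.start_mem_verts
  obtain ⟨A₁, A₂, hedA, _⟩ := rot.exists_split_vertex hvrot
  -- the 2-cut for (u, v)
  obtain ⟨F, hF2, hFcut⟩ := Hcut u v huv
  have h₁ : ∃ f ∈ A₁.edges, f ∈ F := by
    by_contra hc
    push_neg at hc
    exact hFcut (A₁.reachAvoid fun f hf => by simpa using hc f hf)
  have h₂ : ∃ f ∈ A₂.edges, f ∈ F := by
    by_contra hc
    push_neg at hc
    exact hFcut ((A₂.reachAvoid fun f hf => by simpa using hc f hf).symm)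
  have h₃ : ∃ f ∈ R.edges, f ∈ F := by
    by_contra hc
    push_neg at hc
    exact hFcut (R.reachAvoid fun f hf => by simpa using hc f hf)
  obtain ⟨f₁, hf₁, hf₁F⟩ := h₁
  obtain ⟨f₂, hf₂, hf₂F⟩ := h₂
  obtain ⟨f₃, hf₃, hf₃F⟩ := h₃
  have hf₁c : f₁ ∈ c₁.edges := hperm.subset (by rw [hedA]; simp [hf₁])
  have hf₂c : f₂ ∈ c₁.edges := hperm.subset (by rw [hedA]; simp [hf₂])
  have h12 : f₁ ≠ f₂ := by
    have hnd := hrotnd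
    rw [hedA] at hnd
    exact fun hh => (List.nodup_append'.mp hnd).2.2 hf₁ (hh ▸ hf₂)
  have h13 : f₁ ≠ f₃ := fun hh => (hR f₃ hf₃) (hh ▸ hf₁c)
  have h23 : f₂ ≠ f₃ := fun hh => (hR f₃ hf₃) (hh ▸ hf₂c)
  have hsub : ({f₁, f₂, f₃} : Finset E) ⊆ F := by
    intro f hf
    simp only [Finset.mem_insert, Finset.mem_singleton] at hf
    rcases hf with rfl | rfl | rfl <;> assumption
  have hcard : ({f₁, f₂, f₃} : Finset E).card = 3 := by
    rw [Finset.card_insert_of_notMem (by simp [h12, h13]),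
      Finset.card_insert_of_notMem (by simp [h23]), Finset.card_singleton]
  have := Finset.card_le_card hsub
  rw [hcard, hF2] at this
  omega

end Multigraph
namespace Multigraph

variable {V E : Type} {G : Multigraph V E}

lemma single_edge_closed {v : V} (rot : G.Walk v v) {e : E} (h : rot.edges = [e]) :
    G.ends e = s(v, v) := by
  cases rot with
  | nil => simp at h
  | cons d hd rest =>
      simp only [Walk.edges_cons, List.cons.injEq] at h
      obtain ⟨rfl, h2⟩ := h
      have := rest.eq_of_edges_nil h2
      subst this
      exact hd

lemma other_edge {v : V} (rot : G.Walk v v) (hnd : rot.edges.Nodup) {e₁ : E}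
    (he : e₁ ∈ rot.edges) (hone : rot.edges ≠ [e₁]) :
    ∃ g ∈ rot.edges, g ≠ e₁ ∧ v ∈ G.ends g := by
  cases rot with
  | nil => simp at he
  | cons d hd rest =>
      by_cases hd1 : e₁ = d
      · subst hd1
        have hrest : rest.edges ≠ [] := by
          intro hh
          exact hone (by simp [hh])
        obtain ⟨g, hg, hgv⟩ := rest.exists_end_edge hrest
        refine ⟨g, by simp [hg], ?_, hgv⟩
        simp only [Walk.edges_cons, List.nodup_cons] at hnd
        exact fun hh => hnd.1 (hh ▸ hg)
      · exact ⟨d, by simp, fun hh => hd1 hh.symm, by rw [hd]; simp⟩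

lemma reachAvoid_one [DecidableEq E]
    (hc : ∀ e : E, ∃ S : Finset E, G.IsSimpleCycleOn S ∧ e ∈ S) (f : E) {u v : V} (h : G.ReachAvoid ∅ u v) :
    G.ReachAvoid {f} u v := by
  induction h with
  | refl => exact .refl _
  | tail e he hvw _ ih =>
      by_cases hef : e = f
      · subst hef
        obtain ⟨S, hS, heS⟩ := hc e
        obtain ⟨z, c, hne, hnd, hvnd, rfl⟩ := hS
        have hec := List.mem_toFinset.mp heS
        obtain ⟨x', y', q, r, hxy, hed, hvs⟩ := c.exists_split_edge hec
        have hnodup := hnd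
        rw [hed] at hnodup
        have heq : e ∉ q.edges := fun hh =>
          (List.nodup_append'.mp hnodup).2.2 hh (by simp)
        have her : e ∉ r.edges := by
          have := (List.nodup_append'.mp hnodup).2.1
          simp only [List.nodup_cons] at this
          exact this.1
        have hza : G.ReachAvoid {e} z x' :=
          q.reachAvoid fun g hg hgm => heq (by rwa [Set.mem_singleton_iff.mp hgm] at hg)
        have hbz : G.ReachAvoid {e} y' z :=
          r.reachAvoid fun g hg hgm => her (by rwa [Set.mem_singleton_iff.mp hgm] at hg)
        have hba : G.ReachAvoid {e} x' y' := (hbz.trans hza).symm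
        rcases Sym2.eq_iff.mp (hxy.symm.trans hvw) with ⟨rfl, rfl⟩ | ⟨rfl, rfl⟩
        · exact ih.trans hba
        · exact ih.trans hba.symm
      · exact .tail e (by simp [hef]) hvw ih

lemma cactus_forward [DecidableEq E] (h : G.IsCactus) {v w : V} (hvw : v ≠ w) :
    G.edgeConn v w = 2 := by
  obtain ⟨hconn, hcyc⟩ := h
  obtain ⟨p0, -⟩ := (hconn w v).exists_walk_rev
  obtain ⟨p, hp, -⟩ := p0.exists_path
  cases p with
  | nil => exact absurd rfl hvw
  | cons e₁ h₁ tl =>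
    rename_i x
    have hvtl : v ∉ tl.verts := by
      simp only [Walk.IsPath, Walk.verts_cons, List.nodup_cons] at hp
      exact hp.1
    have hxv : x ≠ v := fun hh => hvtl (hh ▸ tl.start_mem_verts)
    obtain ⟨C, ⟨hCc, heC⟩, hCu⟩ := hcyc e₁
    obtain ⟨z, c, hne, hnd, hvnd, hto⟩ := hCc
    have he₁c : e₁ ∈ c.edges := by rw [← List.mem_toFinset, hto]; exact heC
    have hvc : v ∈ c.verts := c.mem_verts_of_mem_ends he₁c (by rw [h₁]; simp)
    obtain ⟨q, r, hed, hvs⟩ := c.exists_split_vertex hvc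
    set rot := r.append q with hrotdef
    have hperm : rot.edges.Perm c.edges := by
      rw [Walk.edges_append, hed]; exact List.perm_append_comm
    have hrotnd : rot.edges.Nodup := hperm.nodup_iff.mpr hnd
    have he₁rot : e₁ ∈ rot.edges := hperm.mem_iff.mpr he₁c
    have hone : rot.edges ≠ [e₁] := by
      intro heq
      have := single_edge_closed rot heq
      rcases Sym2.eq_iff.mp (h₁.symm.trans this) with ⟨-, h2⟩ | ⟨-, h2⟩ <;>
        exact hxv h2
    obtain ⟨g, hgrot, hge, hgv⟩ := other_edge rot hrotnd he₁rot hone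
    set F : Finset E := {e₁, g} with hFdef
    have hFcard : F.card = 2 := by
      rw [hFdef, Finset.card_insert_of_notMem (by simp [Ne.symm hge]),
        Finset.card_singleton]
    have hcut : ¬ G.ReachAvoid ↑F v w := by
      intro hra
      have htail : G.ReachAvoid ↑F x w := by
        refine tl.reachAvoid fun f hf hfF => ?_
        have hvf : v ∈ G.ends f := by
          simp only [hFdef, Finset.coe_insert, Finset.coe_singleton,
            Set.mem_insert_iff, Set.mem_singleton_iff] at hfF
          rcases hfF with rfl | rfl
          · rw [h₁]; simp
          · exact hgv
        exact hvtl (tl.mem_verts_of_mem_ends hf hvf)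
      have hvx2 : G.ReachAvoid ↑F v x := hra.trans htail.symm
      obtain ⟨P0, hP0⟩ := hvx2.exists_walk_rev
      obtain ⟨P, hPp, hPsub⟩ := P0.exists_path
      have hPavoid : ∀ f ∈ P.edges, f ∉ (↑F : Set E) := fun f hf => hP0 f (hPsub f hf)
      have he₁P : e₁ ∉ P.edges := fun hh => hPavoid e₁ hh (by simp [hFdef])
      have hScyc := isSimpleCycleOn_cons P hPp h₁ he₁P
      have hSC := hCu _ ⟨hScyc, by simp⟩
      have hgC : g ∈ C := by
        rw [← hto, List.mem_toFinset]
        exact hperm.subset hgrot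
      rw [← hSC] at hgC
      simp only [Walk.edges_cons, List.toFinset_cons, Finset.mem_insert,
        List.mem_toFinset] at hgC
      rcases hgC with rfl | hgC
      · exact hge rfl
      · exact hPavoid g hgC (by simp [hFdef])
    have h2mem : 2 ∈ {k : ℕ | ∃ F : Finset E, F.card = k ∧ G.IsEdgeCut v w ↑F} :=
      ⟨F, hFcard, hcut⟩
    have hle := Nat.sInf_le h2mem
    have hmem := Nat.sInf_mem (⟨2, h2mem⟩ :
      {k : ℕ | ∃ F : Finset E, F.card = k ∧ G.IsEdgeCut v w ↑F}.Nonempty)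
    obtain ⟨F', hF'card, hF'cut⟩ := hmem
    have h0 : F'.card ≠ 0 := by
      intro hh
      rw [Finset.card_eq_zero] at hh
      subst hh
      exact hF'cut (by simpa using hconn v w)
    have h1 : F'.card ≠ 1 := by
      intro hh
      obtain ⟨f, rfl⟩ := Finset.card_eq_one.mp hh
      refine hF'cut ?_
      have := reachAvoid_one (fun e => (hcyc e).exists) f (hconn v w)
      simpa using this
    unfold edgeConn
    omega

lemma cactus_backward [DecidableEq E]
    (H : ∀ v w : V, v ≠ w → G.edgeConn v w = 2) : G.IsCactus := by
  have Hra0 : ∀ u v : V, G.ReachAvoid ∅ u v := by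
    intro u v
    by_cases huv : u = v
    · subst huv; exact .refl _
    by_contra hra
    have h0 : (0 : ℕ) ∈ {k : ℕ | ∃ F : Finset E, F.card = k ∧ G.IsEdgeCut u v ↑F} :=
      ⟨∅, Finset.card_empty, by simpa [IsEdgeCut] using hra⟩
    have := Nat.sInf_le h0
    have h2 := H u v huv
    unfold edgeConn at h2
    omega
  have Hra1 : ∀ (f : E) (u v : V), G.ReachAvoid {f} u v := by
    intro f u v
    by_cases huv : u = v
    · subst huv; exact .refl _
    by_contra hra
    have h1 : (1 : ℕ) ∈ {k : ℕ | ∃ F : Finset E, F.card = k ∧ G.IsEdgeCut u v ↑F} :=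
      ⟨{f}, Finset.card_singleton f, by simpa [IsEdgeCut] using hra⟩
    have := Nat.sInf_le h1
    have h2 := H u v huv
    unfold edgeConn at h2
    omega
  have Hcut2 : ∀ u v : V, u ≠ v → ∃ F : Finset E, F.card = 2 ∧ ¬ G.ReachAvoid ↑F u v := by
    intro u v huv
    have h := H u v huv
    unfold edgeConn at h
    have hne : {k : ℕ | ∃ F : Finset E, F.card = k ∧ G.IsEdgeCut u v ↑F}.Nonempty := by
      by_contra hc
      rw [Set.not_nonempty_iff_eq_empty] at hc
      rw [hc, Nat.sInf_empty] at h
      omega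
    have hm := Nat.sInf_mem hne
    rw [h] at hm
    obtain ⟨F, hF, hcut⟩ := hm
    exact ⟨F, hF, hcut⟩
  refine ⟨Hra0, ?_⟩
  intro e
  obtain ⟨a, b, hab⟩ := sym2_exists (G.ends e)
  by_cases hl : a = b
  · subst hl
    refine ⟨{e}, ⟨⟨a, .cons e hab (.nil a), by simp, by simp, by simp, by simp⟩,
      Finset.mem_singleton_self e⟩, ?_⟩
    intro S' hS'
    exact cycle_eq_of_loop hS'.1 hS'.2 hab
  · obtain ⟨P0, hP0⟩ := (Hra1 e a b).exists_walk_rev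
    obtain ⟨P, hPp, hPsub⟩ := P0.exists_path
    have heP : e ∉ P.edges := fun hh => hP0 e (hPsub e hh) rfl
    have hcycS := isSimpleCycleOn_cons P hPp hab heP
    have key : ∀ S₁ S₂ : Finset E,
        G.IsSimpleCycleOn S₁ ∧ e ∈ S₁ → G.IsSimpleCycleOn S₂ ∧ e ∈ S₂ → S₁ = S₂ := by
      intro S₁ S₂ h₁ h₂
      obtain ⟨hc₁, he₁⟩ := h₁
      obtain ⟨hc₂, he₂⟩ := h₂
      by_contra hne
      obtain ⟨z₁, c₁, -, hnd₁, hvnd₁, rfl⟩ := hc₁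
      obtain ⟨z₂, c₂, -, hnd₂, hvnd₂, rfl⟩ := hc₂
      have he₁' : e ∈ c₁.edges := List.mem_toFinset.mp he₁
      have he₂' : e ∈ c₂.edges := List.mem_toFinset.mp he₂
      have hor : ¬ c₁.edges.toFinset ⊆ c₂.edges.toFinset ∨
          ¬ c₂.edges.toFinset ⊆ c₁.edges.toFinset := by
        by_contra hc
        push_neg at hc
        exact hne (Finset.Subset.antisymm hc.1 hc.2)
      rcases hor with hcc | hcc
      · obtain ⟨g, hg1, hg2⟩ := Finset.not_subset.mp hcc
        exact thetaContra Hcut2 c₂ c₁ hnd₂ hvnd₂ hnd₁ hvnd₁ he₂' he₁' hab hl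
          (List.mem_toFinset.mp hg1) (fun hh => hg2 (List.mem_toFinset.mpr hh))
      · obtain ⟨g, hg1, hg2⟩ := Finset.not_subset.mp hcc
        exact thetaContra Hcut2 c₁ c₂ hnd₁ hvnd₁ hnd₂ hvnd₂ he₁' he₂' hab hl
          (List.mem_toFinset.mp hg1) (fun hh => hg2 (List.mem_toFinset.mpr hh))
    exact ⟨(Walk.cons e hab P).edges.toFinset, ⟨hcycS, by simp⟩,
      fun S' h' => key S' _ h' ⟨hcycS, by simp⟩⟩

end Multigraph
/-- A finite multigraph `G` is a cactus if and only if for every pair of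
distinct vertices `v, w` the edge connectivity satisfies `λ(v, w) = 2`. -/
theorem stmt_0 {V E : Type} [Nonempty V] [Fintype V] [Fintype E] [DecidableEq E]
    (G : Multigraph V E) :
    G.IsCactus ↔ ∀ v w : V, v ≠ w → G.edgeConn v w = 2 := by
  constructor
  · intro h v w hvw
    exact Multigraph.cactus_forward h hvw
  · intro h
    exact Multigraph.cactus_backward h
end

section
/- Let C be the cycle graph of length n and let π be a non-crossing partition of its vertex set, so that the quotient C^π is a cactus. Then the map assigning to each block B of the Kreweras complement K(π) the subgraph of C^π whose edge set is B is a bijection from the blocks of K(π) onto the pads (simple cycles) of C^π; explicitly, the block B = (e_{i₁}, …, e_{i_k}) with i₁ < … < i_k corresponds to the pad through the π-classes of v_{i₁}, v_{i₂}, …, v_{i_k}, where for each l the vertex v_{i_l + 1} is π-equivalent to v_{i_{l+1}} (and v_{i_k + 1} is π-equivalent to v_{i₁}). -/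
set_option autoImplicit false

/-! ## Auxiliary development for the proof -/

section KW
variable {n : ℕ} [NeZero n]
open Fin.NatCast

/-- membership in the cyclic half-open arc `(a, b]` (everything when `a = b`). -/
def inArc (a b x : Fin n) : Prop :=
  (a.val < b.val → a.val < x.val ∧ x.val ≤ b.val) ∧
  (b.val ≤ a.val → (a.val < x.val ∨ x.val ≤ b.val))

/-- cyclic position of `z` measured from base `c`; `pos c c = 0`. -/
def cpos (c z : Fin n) : ℕ := (z.val + n - c.val) % n

lemma cpos_spec (c z : Fin n) :
    cpos c z < n ∧ (z.val = c.val + cpos c z ∨ z.val + n = c.val + cpos c z) := by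
  have h1 := c.isLt; have h2 := z.isLt
  unfold cpos
  rcases Nat.lt_or_ge (z.val + n - c.val) n with h | h
  · rw [Nat.mod_eq_of_lt h]; omega
  · rw [Nat.mod_eq_sub_mod h, Nat.mod_eq_of_lt (by omega)]; omega

lemma cpos_inj {c z w : Fin n} (h : cpos c z = cpos c w) : z = w := by
  have h1 := cpos_spec c z; have h2 := cpos_spec c w
  have := z.isLt; have := w.isLt
  exact Fin.ext (by omega)

lemma val_add_nat (e : Fin n) (d : ℕ) (hd : d ≤ n) :
    (e + (d : Fin n)).val = e.val + d ∨ (e + (d : Fin n)).val + n = e.val + d := by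
  have h1 := e.isLt
  have h2 : (e + (d : Fin n)).val = (e.val + d % n) % n := by
    rw [Fin.val_add, Fin.val_natCast]
  have hd' : d % n = d ∨ (d = n ∧ d % n = 0) := by
    rcases Nat.lt_or_ge d n with h | h
    · exact Or.inl (Nat.mod_eq_of_lt h)
    · refine Or.inr ⟨by omega, ?_⟩
      have hdn : d = n := by omega
      rw [hdn, Nat.mod_self]
  have h3 : e.val + d % n < 2 * n := by have := Nat.mod_le d n; omega
  rcases Nat.lt_or_ge (e.val + d % n) n with h | h
  · rw [Nat.mod_eq_of_lt h] at h2; omega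
  · rw [Nat.mod_eq_sub_mod h, Nat.mod_eq_of_lt (by omega)] at h2; omega

lemma add_cpos_self (e b : Fin n) : b = e + ((cpos e b : ℕ) : Fin n) := by
  have hs := cpos_spec e b
  have h2 := val_add_nat e (cpos e b) (le_of_lt hs.1)
  have hb := b.isLt
  generalize hw : e + ((cpos e b : ℕ) : Fin n) = w at h2 ⊢
  have := w.isLt
  exact Fin.ext (by omega)

lemma val_add_one' (a : Fin n) :
    (a.val + 1 = n ∧ (a + 1).val = 0) ∨ (a.val + 1 < n ∧ (a + 1).val = a.val + 1) := by
  have h1 := a.isLt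
  have hn : 0 < n := Nat.pos_of_ne_zero (NeZero.ne n)
  have h2 : ((1 : ℕ) : Fin n) = (1 : Fin n) := by simp
  have h3 := val_add_nat a 1 hn
  rw [h2] at h3
  have h4 := (a + 1).isLt
  generalize hw : a + 1 = w at h3 h4 ⊢
  omega

lemma arc_iff (a b z : Fin n) : inArc a b z ↔ cpos (a + 1) z ≤ cpos (a + 1) b := by
  have h1 := val_add_one' a
  have ha := a.isLt; have hb := b.isLt; have hz := z.isLt
  generalize hw : a + 1 = w at h1 ⊢
  have s1 := cpos_spec w z; have s2 := cpos_spec w b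
  unfold inArc; omega

/-- the explicit Kreweras complement of `σ`. -/
def kc (σ : Setoid (Fin n)) : Setoid (Fin n) where
  r a b := ∀ x y : Fin n, σ.r x y → (inArc a b x ↔ inArc a b y)
  iseqv := by
    constructor
    · intro a x y hxy; unfold inArc; omega
    · intro a b h x y hxy; have := h x y hxy; unfold inArc at *; omega
    · intro a b c hab hbc x y hxy
      have h1 := hab x y hxy; have h2 := hbc x y hxy
      unfold inArc at *; omega

lemma kc_r (σ : Setoid (Fin n)) (a b : Fin n) :
    (kc σ).r a b ↔ ∀ x y : Fin n, σ.r x y → (inArc a b x ↔ inArc a b y) := Iff.rfl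


lemma half_lt {m : ℕ} (x : Fin (2 * m)) : x.val / 2 < m := by
  have := x.isLt; omega

lemma interRel_iff (σ κ' : Setoid (Fin n)) (x y : Fin (2 * n)) :
    interRel σ κ' x y ↔
      ((x.val % 2 = 0 ∧ y.val % 2 = 0 ∧
          ∃ a b : Fin n, a.val = x.val / 2 ∧ b.val = y.val / 2 ∧ σ.r a b) ∨
        (x.val % 2 = 1 ∧ y.val % 2 = 1 ∧
          ∃ a b : Fin n, a.val = x.val / 2 ∧ b.val = y.val / 2 ∧ κ'.r a b)) := by
  unfold interRel
  constructor
  · rintro (⟨h1, h2, h⟩ | ⟨h1, h2, h⟩)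
    · exact Or.inl ⟨h1, h2, _, _, rfl, rfl, h⟩
    · exact Or.inr ⟨h1, h2, _, _, rfl, rfl, h⟩
  · rintro (⟨h1, h2, a, b, ha, hb, h⟩ | ⟨h1, h2, a, b, ha, hb, h⟩)
    · refine Or.inl ⟨h1, h2, ?_⟩
      show σ.r ⟨x.val / 2, half_lt x⟩ ⟨y.val / 2, half_lt y⟩
      obtain rfl : a = (⟨x.val / 2, half_lt x⟩ : Fin n) := Fin.ext ha
      obtain rfl : b = (⟨y.val / 2, half_lt y⟩ : Fin n) := Fin.ext hb
      exact h
    · refine Or.inr ⟨h1, h2, ?_⟩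
      show κ'.r ⟨x.val / 2, half_lt x⟩ ⟨y.val / 2, half_lt y⟩
      obtain rfl : a = (⟨x.val / 2, half_lt x⟩ : Fin n) := Fin.ext ha
      obtain rfl : b = (⟨y.val / 2, half_lt y⟩ : Fin n) := Fin.ext hb
      exact h

/-- vertex `a` as a point of the interlaced cyclic order -/
def vpt (a : Fin n) : Fin (2 * n) := ⟨2 * a.val, by have := a.isLt; omega⟩
/-- edge `a` as a point of the interlaced cyclic order -/
def ept (a : Fin n) : Fin (2 * n) := ⟨2 * a.val + 1, by have := a.isLt; omega⟩

lemma vpt_val (a : Fin n) : (vpt a).val = 2 * a.val := rfl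
lemma ept_val (a : Fin n) : (ept a).val = 2 * a.val + 1 := rfl

lemma interRel_ee (σ κ' : Setoid (Fin n)) (a b : Fin n) :
    interRel σ κ' (ept a) (ept b) ↔ κ'.r a b := by
  rw [interRel_iff]
  constructor
  · rintro (⟨h1, _⟩ | ⟨_, _, a', b', ha, hb, h⟩)
    · rw [ept_val] at h1; omega
    · rw [ept_val] at ha; rw [ept_val] at hb
      have e1 : a' = a := Fin.ext (by omega)
      have e2 : b' = b := Fin.ext (by omega)
      rwa [e1, e2] at h
  · intro h
    exact Or.inr ⟨by rw [ept_val]; omega, by rw [ept_val]; omega, a, b,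
      by rw [ept_val]; omega, by rw [ept_val]; omega, h⟩

lemma interRel_vv (σ κ' : Setoid (Fin n)) (a b : Fin n) :
    interRel σ κ' (vpt a) (vpt b) ↔ σ.r a b := by
  rw [interRel_iff]
  constructor
  · rintro (⟨_, _, a', b', ha, hb, h⟩ | ⟨h1, _⟩)
    · rw [vpt_val] at ha; rw [vpt_val] at hb
      have e1 : a' = a := Fin.ext (by omega)
      have e2 : b' = b := Fin.ext (by omega)
      rwa [e1, e2] at h
    · rw [vpt_val] at h1; omega
  · intro h
    exact Or.inl ⟨by rw [vpt_val]; omega, by rw [vpt_val]; omega, a, b,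
      by rw [vpt_val]; omega, by rw [vpt_val]; omega, h⟩

lemma interRel_ve (σ κ' : Setoid (Fin n)) (a b : Fin n) :
    ¬ interRel σ κ' (vpt a) (ept b) := by
  rw [interRel_iff]
  rintro (⟨h1, h2, _⟩ | ⟨h1, h2, _⟩) <;> rw [vpt_val] at h1 <;> rw [ept_val] at h2 <;> omega

lemma interRel_ev (σ κ' : Setoid (Fin n)) (a b : Fin n) :
    ¬ interRel σ κ' (ept a) (vpt b) := by
  rw [interRel_iff]
  rintro (⟨h1, h2, _⟩ | ⟨h1, h2, _⟩) <;> rw [ept_val] at h1 <;> rw [vpt_val] at h2 <;> omega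

/-- a cyclic crossing for an equivalence relation yields a linear crossing -/
lemma cyc_cross (σ : Setoid (Fin n)) (hσ : NonCrossingRel σ.r)
    (c q₁ q₂ q₃ q₄ : ℕ) (z₁ z₂ z₃ z₄ : Fin n)
    (hc : c < n) (hq12 : q₁ < q₂) (hq23 : q₂ < q₃) (hq34 : q₃ < q₄) (hq4 : q₄ < n)
    (h1 : z₁.val = c + q₁ ∨ z₁.val + n = c + q₁)
    (h2 : z₂.val = c + q₂ ∨ z₂.val + n = c + q₂)
    (h3 : z₃.val = c + q₃ ∨ z₃.val + n = c + q₃)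
    (h4 : z₄.val = c + q₄ ∨ z₄.val + n = c + q₄)
    (r13 : σ.r z₁ z₃) (r24 : σ.r z₂ z₄)
    (n12 : ¬ σ.r z₁ z₂) (n23 : ¬ σ.r z₂ z₃) (n34 : ¬ σ.r z₃ z₄) (n41 : ¬ σ.r z₄ z₁) :
    False := by
  have b1 := z₁.isLt; have b2 := z₂.isLt; have b3 := z₃.isLt; have b4 := z₄.isLt
  apply hσ
  by_cases w4 : c + q₄ < n
  · exact ⟨z₁, z₂, z₃, z₄, by show z₁.val < z₂.val; omega, by show z₂.val < z₃.val; omega,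
      by show z₃.val < z₄.val; omega, r13, r24, n12⟩
  by_cases w3 : c + q₃ < n
  · exact ⟨z₄, z₁, z₂, z₃, by show z₄.val < z₁.val; omega, by show z₁.val < z₂.val; omega,
      by show z₂.val < z₃.val; omega, σ.iseqv.symm r24, r13, n41⟩
  by_cases w2 : c + q₂ < n
  · exact ⟨z₃, z₄, z₁, z₂, by show z₃.val < z₄.val; omega, by show z₄.val < z₁.val; omega,
      by show z₁.val < z₂.val; omega, σ.iseqv.symm r13, σ.iseqv.symm r24, n34⟩
  by_cases w1 : c + q₁ < n
  · exact ⟨z₂, z₃, z₄, z₁, by show z₂.val < z₃.val; omega, by show z₃.val < z₄.val; omega,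
      by show z₄.val < z₁.val; omega, r24, σ.iseqv.symm r13, n23⟩
  · exact ⟨z₁, z₂, z₃, z₄, by show z₁.val < z₂.val; omega, by show z₂.val < z₃.val; omega,
      by show z₃.val < z₄.val; omega, r13, r24, n12⟩


variable {σ : Setoid (Fin n)}

/-- a crossing-class pair forbids relating two edges -/
lemma cross_core {κ' : Setoid (Fin n)} (h : NonCrossingRel (interRel σ κ'))
    {a b x y : Fin n} (hab : κ'.r a b) (hlt : a.val < b.val) (hxy : σ.r x y)
    (hx1 : a.val < x.val) (hx2 : x.val ≤ b.val)
    (hy : y.val ≤ a.val ∨ b.val < y.val) : False := by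
  apply h
  rcases hy with hy | hy
  · exact ⟨vpt y, ept a, vpt x, ept b,
      by show (vpt y).val < (ept a).val; rw [vpt_val, ept_val]; omega,
      by show (ept a).val < (vpt x).val; rw [vpt_val, ept_val]; omega,
      by show (vpt x).val < (ept b).val; rw [vpt_val, ept_val]; omega,
      (interRel_vv σ κ' y x).2 (σ.iseqv.symm hxy),
      (interRel_ee σ κ' a b).2 hab,
      interRel_ve σ κ' y a⟩
  · exact ⟨ept a, vpt x, ept b, vpt y,
      by show (ept a).val < (vpt x).val; rw [vpt_val, ept_val]; omega,
      by show (vpt x).val < (ept b).val; rw [vpt_val, ept_val]; omega,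
      by show (ept b).val < (vpt y).val; rw [vpt_val, ept_val]; omega,
      (interRel_ee σ κ' a b).2 hab,
      (interRel_vv σ κ' x y).2 hxy,
      interRel_ev σ κ' a x⟩

/-- any partition compatible with `σ` refines the explicit Kreweras complement -/
lemma le_kc (κ' : Setoid (Fin n)) (h : NonCrossingRel (interRel σ κ')) : κ' ≤ kc σ := by
  rw [Setoid.le_def]
  intro a b hab x y hxy
  by_cases heq : a = b
  · subst heq; unfold inArc; omega
  have hvne : a.val ≠ b.val := fun hv => heq (Fin.ext hv)
  constructor
  · intro hin
    by_contra hout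
    unfold inArc at hin hout
    rcases Nat.lt_or_ge a.val b.val with hlt | hge
    · exact cross_core h hab hlt hxy (by omega) (by omega) (by omega)
    · exact cross_core h (κ'.iseqv.symm hab) (by omega) (σ.iseqv.symm hxy)
        (by omega) (by omega) (by omega)
  · intro hin
    by_contra hout
    unfold inArc at hin hout
    rcases Nat.lt_or_ge a.val b.val with hlt | hge
    · exact cross_core h hab hlt (σ.iseqv.symm hxy) (by omega) (by omega) (by omega)
    · exact cross_core h (κ'.iseqv.symm hab) (by omega) hxy (by omega) (by omega) (by omega)

/-- the explicit Kreweras complement is compatible with `σ` -/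
lemma kc_compat (hσ : NonCrossingRel σ.r) : NonCrossingRel (interRel σ (kc σ)) := by
  rintro ⟨i₁, i₂, i₃, i₄, h12, h23, h34, r13, r24, nr12⟩
  have h12' : i₁.val < i₂.val := h12
  have h23' : i₂.val < i₃.val := h23
  have h34' : i₃.val < i₄.val := h34
  rw [interRel_iff] at r13 r24
  rcases r13 with ⟨p1, p3, a1, a3, ha1, ha3, hr13⟩ | ⟨p1, p3, a1, a3, ha1, ha3, hr13⟩ <;>
    rcases r24 with ⟨p2, p4, a2, a4, ha2, ha4, hr24⟩ | ⟨p2, p4, a2, a4, ha2, ha4, hr24⟩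
  · -- σ-σ crossing
    apply hσ
    have n12 : ¬ σ.r a1 a2 := fun hr =>
      nr12 ((interRel_iff σ (kc σ) i₁ i₂).2 (Or.inl ⟨p1, p2, a1, a2, ha1, ha2, hr⟩))
    exact ⟨a1, a2, a3, a4, by show a1.val < a2.val; omega, by show a2.val < a3.val; omega,
      by show a3.val < a4.val; omega, hr13, hr24, n12⟩
  · -- σ then kc : vertices a1 a3 separated by edges a2 a4
    have h := hr24 a1 a3 hr13
    unfold inArc at h
    omega
  · -- kc then σ
    have h := hr13 a2 a4 hr24
    unfold inArc at h
    omega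
  · -- kc-kc
    have n12 : ¬ (kc σ).r a1 a2 := fun hr =>
      nr12 ((interRel_iff σ (kc σ) i₁ i₂).2 (Or.inr ⟨p1, p2, a1, a2, ha1, ha2, hr⟩))
    rw [kc_r] at n12
    push_neg at n12
    obtain ⟨x, y, hxy, hniff⟩ := n12
    have g13 := hr13 x y hxy
    have g24 := hr24 x y hxy
    unfold inArc at g13 g24 hniff
    omega

/-- `κ` satisfying the Kreweras property equals the explicit complement -/
lemma kappa_eq {κ : Setoid (Fin n)} (hσ : NonCrossingRel σ.r)
    (hκ : IsKrewerasComplement σ κ) (a b : Fin n) : κ.r a b ↔ (kc σ).r a b := by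
  constructor
  · intro h; exact Setoid.le_def.1 (le_kc κ hκ.1) h
  · intro h; exact Setoid.le_def.1 (hκ.2 (kc σ) (kc_compat hσ)) h

/-- distinct κ-related edges are never σ-related -/
lemma sep {κ : Setoid (Fin n)} (hκ : IsKrewerasComplement σ κ) {a b : Fin n}
    (hne : a ≠ b) (hk : κ.r a b) (hs : σ.r a b) : False := by
  apply hκ.1
  have hvne : a.val ≠ b.val := fun hv => hne (Fin.ext hv)
  rcases Nat.lt_or_ge a.val b.val with hlt | hge
  · exact ⟨vpt a, ept a, vpt b, ept b,
      by show (vpt a).val < (ept a).val; rw [vpt_val, ept_val]; omega,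
      by show (ept a).val < (vpt b).val; rw [vpt_val, ept_val]; omega,
      by show (vpt b).val < (ept b).val; rw [vpt_val, ept_val]; omega,
      (interRel_vv σ κ a b).2 hs, (interRel_ee σ κ a b).2 hk, interRel_ve σ κ a a⟩
  · exact ⟨vpt b, ept b, vpt a, ept a,
      by show (vpt b).val < (ept b).val; rw [vpt_val, ept_val]; omega,
      by show (ept b).val < (vpt a).val; rw [vpt_val, ept_val]; omega,
      by show (vpt a).val < (ept a).val; rw [vpt_val, ept_val]; omega,
      (interRel_vv σ κ b a).2 (σ.iseqv.symm hs), (interRel_ee σ κ b a).2 (κ.iseqv.symm hk),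
      interRel_ve σ κ b b⟩


lemma mem_setoidClass (κ : Setoid (Fin n)) (i j : Fin n) :
    j ∈ setoidClass κ i ↔ κ.r i j := by
  simp [setoidClass]

lemma cpos_self (c : Fin n) : cpos c c = 0 := by
  have h := cpos_spec c c; have := c.isLt; omega

lemma cpos_eq_zero {c z : Fin n} (h : cpos c z = 0) : z = c := by
  have h1 := cpos_spec c z; have := c.isLt; have := z.isLt
  exact Fin.ext (by omega)

/-- towards statement (2): the cyclic successor inside a Kreweras block -/
lemma next_sigma {κ : Setoid (Fin n)} (hσ : NonCrossingRel σ.r)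
    (hκ : IsKrewerasComplement σ κ)
    (a j : Fin n) (h : CyclicNextIn (setoidClass κ a) a j) : σ.r (a + 1) j := by
  obtain ⟨ha, hjB, d, hd0, hdn, hjd, hmin⟩ := h
  have hkaj : κ.r a j := (mem_setoidClass κ a j).1 hjB
  set w := a + 1 with hw
  have hCne : (setoidClass σ w).Nonempty := ⟨w, (mem_setoidClass σ w w).2 (σ.iseqv.refl w)⟩
  obtain ⟨m, hmC, hmax⟩ := Finset.exists_max_image (setoidClass σ w) (cpos w) hCne
  have hmC' : σ.r w m := (mem_setoidClass σ w m).1 hmC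
  have key : ∀ x y : Fin n, σ.r x y → inArc a m x → inArc a m y := by
    intro x y hxy hx
    by_cases hwx : σ.r w x
    · have hy : y ∈ setoidClass σ w := (mem_setoidClass σ w y).2 (σ.iseqv.trans hwx hxy)
      rw [arc_iff, ← hw]; exact hmax y hy
    · by_contra hy
      rw [arc_iff, ← hw] at hx hy
      push_neg at hy
      have s1 := cpos_spec w x; have s2 := cpos_spec w m; have s3 := cpos_spec w y
      have hx0 : cpos w x ≠ 0 := fun h0 => hwx (by rw [cpos_eq_zero h0])
      have hxm : cpos w x ≠ cpos w m := fun h0 => hwx (by rw [cpos_inj h0]; exact hmC')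
      exact cyc_cross σ hσ w.val 0 (cpos w x) (cpos w m) (cpos w y) w x m y
        w.isLt (by omega) (by omega) (by omega) s3.1
        (Or.inl (by omega)) s1.2 s2.2 s3.2
        hmC' hxy hwx
        (fun hh => hwx (σ.iseqv.trans hmC' (σ.iseqv.symm hh)))
        (fun hh => absurd (hmax y ((mem_setoidClass σ w y).2 (σ.iseqv.trans hmC' hh)))
          (by omega))
        (fun hh => absurd (hmax y ((mem_setoidClass σ w y).2 (σ.iseqv.symm hh)))
          (by omega))
  have hkam : (kc σ).r a m :=
    fun x y hxy => ⟨fun hx => key x y hxy hx, fun hyy => key y x (σ.iseqv.symm hxy) hyy⟩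
  have hkam' : κ.r a m := (kappa_eq hσ hκ a m).2 hkam
  have sj := cpos_spec w j
  have sm := cpos_spec w m
  have sam := cpos_spec a m
  have hwv := val_add_one' a
  rw [← hw] at hwv
  have hjv := val_add_nat a d hdn
  rw [← hjd] at hjv
  have hja := j.isLt; have haa := a.isLt; have hma := m.isLt; have hwa := w.isLt
  have hcj : cpos w j = d - 1 := by omega
  have harc : inArc a j m := by
    have hkaj' : (kc σ).r a j := (kappa_eq hσ hκ a j).1 hkaj
    have h1 : inArc a j w := by
      rw [arc_iff, ← hw]
      have := cpos_self w
      omega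
    exact (hkaj' w m hmC').1 h1
  rw [arc_iff, ← hw] at harc
  have hmk : m ∈ setoidClass κ a := (mem_setoidClass κ a m).2 hkam'
  by_cases hlt : cpos w m + 1 < d
  · exfalso
    have hmas := add_cpos_self a m
    have ht : cpos a m = cpos w m + 1 := by omega
    exact hmin (cpos a m) (by omega) (by omega) (by rw [← hmas]; exact hmk)
  · have hmj : m = j := cpos_inj (c := w) (by omega)
    rw [← hmj]
    exact hmC'


lemma quot_ends (σ : Setoid (Fin n)) (e : Fin n) :
    ((cycleGraph n).quot σ).ends e = s(Quotient.mk σ e, Quotient.mk σ (e + 1)) := by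
  show Sym2.map (Quotient.mk σ) s(e, e + 1) = _
  exact Sym2.map_pair_eq _ _ _

lemma add_to_base (i e : Fin n) : e + ((n - cpos i e : ℕ) : Fin n) = i := by
  have hs := cpos_spec i e
  have h2 := val_add_nat e (n - cpos i e) (by omega)
  generalize hww : e + ((n - cpos i e : ℕ) : Fin n) = w2 at h2 ⊢
  have := w2.isLt; have := i.isLt; have := e.isLt
  exact Fin.ext (by omega)

lemma walkAux {κ : Setoid (Fin n)} (hσ : NonCrossingRel σ.r)
    (hκ : IsKrewerasComplement σ κ) (i : Fin n) :
    ∀ k : ℕ, ∀ e : Fin n, κ.r i e → n - cpos i e ≤ k →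
    ∃ p : ((cycleGraph n).quot σ).Walk (Quotient.mk σ e) (Quotient.mk σ i),
      p.edges ≠ [] ∧ p.edges.Nodup ∧
      (∀ b : Fin n, b ∈ p.edges ↔ (κ.r i b ∧ cpos i e ≤ cpos i b)) ∧
      p.verts = p.edges.map (Quotient.mk σ) ++ [Quotient.mk σ i] := by
  intro k
  induction k with
  | zero => intro e _ hk; exact absurd hk (by have := (cpos_spec i e).1; omega)
  | succ k IH =>
    intro e hie hk
    classical
    have hex : ∃ d : ℕ, 0 < d ∧ d ≤ n ∧ κ.r i (e + (d : Fin n)) := by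
      have h1 := (cpos_spec i e).1
      refine ⟨n - cpos i e, by omega, by omega, ?_⟩
      rw [add_to_base i e]
    obtain ⟨hd0, hdn, hdB⟩ := Nat.find_spec hex
    have hdmin := fun d' (h' : d' < Nat.find hex) => Nat.find_min hex h'
    set d := Nat.find hex with hdd
    set j := e + (d : Fin n) with hj
    have si := cpos_spec i e
    have sj := cpos_spec i j
    have hjv := val_add_nat e d hdn
    rw [← hj] at hjv
    have hie' := i.isLt; have hee := e.isLt; have hjj := j.isLt
    -- d does not overshoot i
    have hdle : d ≤ n - cpos i e := by
      by_contra hgt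
      refine hdmin (n - cpos i e) (by omega) ⟨by omega, by omega, ?_⟩
      rw [add_to_base i e]
    -- cyclic-next structure, giving the σ-relation
    have hcn : CyclicNextIn (setoidClass κ e) e j := by
      refine ⟨(mem_setoidClass κ e e).2 (κ.iseqv.refl e),
        (mem_setoidClass κ e j).2 (κ.iseqv.trans (κ.iseqv.symm hie) hdB), d, hd0, hdn, hj, ?_⟩
      intro d' h1 h2 hmem
      have : κ.r i (e + (d' : Fin n)) :=
        κ.iseqv.trans hie ((mem_setoidClass κ e _).1 hmem)
      exact hdmin d' h2 ⟨h1, by omega, this⟩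
    have hsig : σ.r (e + 1) j := next_sigma hσ hκ e j hcn
    have hends : ((cycleGraph n).quot σ).ends e = s(Quotient.mk σ e, Quotient.mk σ j) := by
      rw [quot_ends, Quotient.sound hsig]
    by_cases hji : j = i
    · -- base case: single edge back to i
      rw [hji] at hends
      refine ⟨.cons e hends (.nil _), by simp [Multigraph.Walk.edges], by
        simp [Multigraph.Walk.edges], ?_, by simp [Multigraph.Walk.verts, Multigraph.Walk.edges]⟩
      intro b
      simp only [Multigraph.Walk.edges, List.mem_singleton]
      constructor
      · rintro rfl; exact ⟨hie, le_refl _⟩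
      · rintro ⟨hb1, hb2⟩
        by_contra hne
        have sb := cpos_spec i b
        have sd := cpos_spec e b
        have hbb := b.isLt
        have hb0 : cpos e b ≠ 0 := fun h0 => hne (cpos_eq_zero h0)
        -- i.val relation: j = i
        have hIv : i.val = e.val + d ∨ i.val + n = e.val + d := by rw [← hji]; exact hjv
        refine hdmin (cpos e b) (by omega) ⟨by omega, by omega, ?_⟩
        rw [← add_cpos_self e b]
        exact hb1
    · -- recursive case
      have hdlt : d < n - cpos i e := by
        rcases Nat.lt_or_ge d (n - cpos i e) with h | h
        · exact h
        · exfalso; apply hji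
          have : d = n - cpos i e := by omega
          rw [hj, this, add_to_base i e]
      have hcpj : cpos i j = cpos i e + d := by omega
      obtain ⟨p', hne', hnd', hmem', hv'⟩ := IH j hdB (by omega)
      refine ⟨.cons e hends p', by simp [Multigraph.Walk.edges], ?_, ?_, ?_⟩
      · simp only [Multigraph.Walk.edges, List.nodup_cons]
        exact ⟨fun hmem => by have := ((hmem' e).1 hmem).2; omega, hnd'⟩
      · intro b
        simp only [Multigraph.Walk.edges, List.mem_cons]
        constructor
        · rintro (rfl | hb)
          · exact ⟨hie, le_refl _⟩
          · have := (hmem' b).1 hb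
            exact ⟨this.1, by omega⟩
        · rintro ⟨hb1, hb2⟩
          by_cases hne2 : b = e
          · exact Or.inl hne2
          · right
            apply (hmem' b).2
            refine ⟨hb1, ?_⟩
            by_contra hlt2
            have sb := cpos_spec i b
            have sd := cpos_spec e b
            have hbb := b.isLt
            have hb0 : cpos e b ≠ 0 := fun h0 => hne2 (cpos_eq_zero h0)
            have hbe : cpos i b ≠ cpos i e := fun h0 => hne2 (cpos_inj h0)
            refine hdmin (cpos e b) (by omega) ⟨by omega, by omega, ?_⟩
            rw [← add_cpos_self e b]
            exact hb1
      · simp only [Multigraph.Walk.verts, Multigraph.Walk.edges, hv', List.map_cons,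
          List.cons_append]

lemma class_is_cycle {κ : Setoid (Fin n)} (hσ : NonCrossingRel σ.r)
    (hκ : IsKrewerasComplement σ κ) (i : Fin n) :
    ((cycleGraph n).quot σ).IsSimpleCycleOn (setoidClass κ i) := by
  obtain ⟨p, hne, hnd, hmem, hv⟩ := walkAux hσ hκ i n i (κ.iseqv.refl i) (by omega)
  refine ⟨Quotient.mk σ i, p, hne, hnd, ?_, ?_⟩
  · rw [hv, List.dropLast_concat]
    refine List.Nodup.map_on ?_ hnd
    intro x hx y hy hxy
    by_contra hne2
    exact sep hκ hne2
      (κ.iseqv.trans (κ.iseqv.symm ((hmem x).1 hx).1) ((hmem y).1 hy).1)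
      (Quotient.exact hxy)
  · ext b
    rw [List.mem_toFinset, hmem b, mem_setoidClass]
    have := cpos_self i
    exact ⟨fun h => h.1, fun h => ⟨h, by omega⟩⟩

end KW

/-- Let `C` be the cycle graph of length `n` and `π` a non-crossing
partition of its vertices, so that `C^π` is a cactus.  Then the map assigning to each
block `B` of the Kreweras complement `K(π)` the subgraph of `C^π` with edge set `B` is a
bijection from the blocks of `K(π)` onto the pads (simple cycles) of `C^π`; explicitly,
for each edge `e_i` of a block `B` with cyclic successor `e_j` in `B`, the vertex
`v_{i+1}` is `π`-equivalent to `v_j`. -/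
theorem stmt_2 (n : ℕ) [NeZero n] (σ κ : Setoid (Fin n))
    (hσ : NonCrossingRel σ.r)
    (hcactus : ((cycleGraph n).quot σ).IsCactus)
    (hκ : IsKrewerasComplement σ κ) :
    (∀ S : Finset (Fin n),
        ((cycleGraph n).quot σ).IsSimpleCycleOn S ↔ ∃ i : Fin n, S = setoidClass κ i) ∧
    (∀ i j : Fin n, CyclicNextIn (setoidClass κ i) i j → σ.r (i + 1) j) := by
  constructor
  · intro S
    constructor
    · intro hS
      obtain ⟨e, heS⟩ : ∃ e, e ∈ S := by
        obtain ⟨v, p, hne, _, _, hset⟩ := hS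
        obtain ⟨e, he⟩ := List.exists_mem_of_ne_nil p.edges hne
        exact ⟨e, by rw [← hset]; exact List.mem_toFinset.2 he⟩
      obtain ⟨T, hT, hTu⟩ := hcactus.2 e
      refine ⟨e, ?_⟩
      have h1 : S = T := hTu S ⟨hS, heS⟩
      have h2 : setoidClass κ e = T := hTu _ ⟨class_is_cycle hσ hκ e,
        (mem_setoidClass κ e e).2 (κ.iseqv.refl e)⟩
      rw [h1, ← h2]
    · rintro ⟨i, rfl⟩; exact class_is_cycle hσ hκ i
  · intro i j hcn; exact next_sigma hσ hκ i j hcn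
end
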